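/- Fix a₀ ∈ ℝⁿ and let Q : ℝ → M(n×n, ℝ) and r : ℝ → ℝⁿ be differentiable. Define L(t) = [[−Q(t), r(t), 0], [a₀ᵀ, 0, −r(t)ᵀ], [0, −a₀, Q(t)ᵀ]] and M(t) = [[−Q(t), 0, 0], [a₀ᵀ, 0, 0], [0, −a₀, Q(t)ᵀ]] (block sizes n,1,n). Then the Lax equation L̇ = [L, M] holds on ℝ if and only if Q and r satisfy the system of ODEs Q̇ = −r a₀ᵀ and ṙ = Q r. -/

import Mathlib

open Matrix

/-- Index type for `(2n+1)×(2n+1)` real matrices with block sizes `(n, 1, n)`. -/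
abbrev Idx (n : ℕ) := (Fin n ⊕ Fin 1) ⊕ Fin n

/-- The `3×3`-block matrix with block sizes `(n,1,n)` and the given blocks. -/
def blk3 {n : ℕ} (A₁₁ : Matrix (Fin n) (Fin n) ℝ) (A₁₂ : Matrix (Fin n) (Fin 1) ℝ)
    (A₁₃ : Matrix (Fin n) (Fin n) ℝ) (A₂₁ : Matrix (Fin 1) (Fin n) ℝ)
    (A₂₂ : Matrix (Fin 1) (Fin 1) ℝ) (A₂₃ : Matrix (Fin 1) (Fin n) ℝ)
    (A₃₁ : Matrix (Fin n) (Fin n) ℝ) (A₃₂ : Matrix (Fin n) (Fin 1) ℝ)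
    (A₃₃ : Matrix (Fin n) (Fin n) ℝ) : Matrix (Idx n) (Idx n) ℝ :=
  Matrix.fromBlocks (Matrix.fromBlocks A₁₁ A₁₂ A₂₁ A₂₂) (Matrix.fromRows A₁₃ A₂₃)
    (Matrix.fromCols A₃₁ A₃₂) A₃₃

/-- The matrix `J = [[0,0,Iₙ],[0,1,0],[Iₙ,0,0]]` with block sizes `(n,1,n)`. -/
def Jmat (n : ℕ) : Matrix (Idx n) (Idx n) ℝ := blk3 0 0 1 0 1 0 1 0 0

/-- The matrix `V = [[−A₀, a₀, 0], [a₀ᵀ, 0, −a₀ᵀ], [0, −a₀, A₀]]` with block sizes `(n,1,n)`. -/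
def Vmat {n : ℕ} (A₀ : Matrix (Fin n) (Fin n) ℝ) (a₀ : Matrix (Fin n) (Fin 1) ℝ) :
    Matrix (Idx n) (Idx n) ℝ :=
  blk3 (-A₀) a₀ 0 a₀ᵀ 0 (-a₀ᵀ) 0 (-a₀) A₀

/-- For differentiable `Q, r`, with
`L(t) = [[−Q(t), r(t), 0], [a₀ᵀ, 0, −r(t)ᵀ], [0, −a₀, Q(t)ᵀ]]` and
`M(t) = [[−Q(t), 0, 0], [a₀ᵀ, 0, 0], [0, −a₀, Q(t)ᵀ]]`, the Lax equation `L̇ = [L, M]`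
holds on `ℝ` iff `Q̇ = −r a₀ᵀ` and `ṙ = Q r` on `ℝ`. -/
lemma blk3_mul {n : ℕ} (A₁₁ B₁₁ : Matrix (Fin n) (Fin n) ℝ) (A₁₂ B₁₂ : Matrix (Fin n) (Fin 1) ℝ)
    (A₁₃ B₁₃ : Matrix (Fin n) (Fin n) ℝ) (A₂₁ B₂₁ : Matrix (Fin 1) (Fin n) ℝ)
    (A₂₂ B₂₂ : Matrix (Fin 1) (Fin 1) ℝ) (A₂₃ B₂₃ : Matrix (Fin 1) (Fin n) ℝ)
    (A₃₁ B₃₁ : Matrix (Fin n) (Fin n) ℝ) (A₃₂ B₃₂ : Matrix (Fin n) (Fin 1) ℝ)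
    (A₃₃ B₃₃ : Matrix (Fin n) (Fin n) ℝ) :
    blk3 A₁₁ A₁₂ A₁₃ A₂₁ A₂₂ A₂₃ A₃₁ A₃₂ A₃₃ * blk3 B₁₁ B₁₂ B₁₃ B₂₁ B₂₂ B₂₃ B₃₁ B₃₂ B₃₃ =
    blk3 (A₁₁*B₁₁+A₁₂*B₂₁+A₁₃*B₃₁) (A₁₁*B₁₂+A₁₂*B₂₂+A₁₃*B₃₂) (A₁₁*B₁₃+A₁₂*B₂₃+A₁₃*B₃₃)
         (A₂₁*B₁₁+A₂₂*B₂₁+A₂₃*B₃₁) (A₂₁*B₁₂+A₂₂*B₂₂+A₂₃*B₃₂) (A₂₁*B₁₃+A₂₂*B₂₃+A₂₃*B₃₃)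
         (A₃₁*B₁₁+A₃₂*B₂₁+A₃₃*B₃₁) (A₃₁*B₁₂+A₃₂*B₂₂+A₃₃*B₃₂) (A₃₁*B₁₃+A₃₂*B₂₃+A₃₃*B₃₃) := by
  ext i j
  rcases i with (i|i)|i <;> rcases j with (j|j)|j <;>
    simp [blk3, fromBlocks_multiply, fromRows_mul_fromCols, fromBlocks_mul_fromRows,
      fromCols_mul_fromBlocks, fromCols_mul_fromRows, fromRows_mul, mul_fromCols,
      add_assoc]

lemma blk3_sub {n : ℕ} (A₁₁ B₁₁ : Matrix (Fin n) (Fin n) ℝ) (A₁₂ B₁₂ : Matrix (Fin n) (Fin 1) ℝ)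
    (A₁₃ B₁₃ : Matrix (Fin n) (Fin n) ℝ) (A₂₁ B₂₁ : Matrix (Fin 1) (Fin n) ℝ)
    (A₂₂ B₂₂ : Matrix (Fin 1) (Fin 1) ℝ) (A₂₃ B₂₃ : Matrix (Fin 1) (Fin n) ℝ)
    (A₃₁ B₃₁ : Matrix (Fin n) (Fin n) ℝ) (A₃₂ B₃₂ : Matrix (Fin n) (Fin 1) ℝ)
    (A₃₃ B₃₃ : Matrix (Fin n) (Fin n) ℝ) :
    blk3 A₁₁ A₁₂ A₁₃ A₂₁ A₂₂ A₂₃ A₃₁ A₃₂ A₃₃ - blk3 B₁₁ B₁₂ B₁₃ B₂₁ B₂₂ B₂₃ B₃₁ B₃₂ B₃₃ =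
    blk3 (A₁₁-B₁₁) (A₁₂-B₁₂) (A₁₃-B₁₃) (A₂₁-B₂₁) (A₂₂-B₂₂) (A₂₃-B₂₃) (A₃₁-B₃₁) (A₃₂-B₃₂)
      (A₃₃-B₃₃) := by
  ext i j
  rcases i with (i|i)|i <;> rcases j with (j|j)|j <;> simp [blk3]

lemma oneone {n : ℕ} (r a : Matrix (Fin n) (Fin 1) ℝ) : rᵀ * a - aᵀ * r = 0 := by
  ext i j
  obtain rfl : i = j := Subsingleton.elim i j
  simp only [Matrix.sub_apply, Matrix.mul_apply, Matrix.transpose_apply, Matrix.zero_apply]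
  rw [sub_eq_zero]
  exact Finset.sum_congr rfl fun k _ => mul_comm _ _

lemma commutator_eq {n : ℕ} (Q : Matrix (Fin n) (Fin n) ℝ) (r a₀ : Matrix (Fin n) (Fin 1) ℝ) :
    blk3 (-Q) r 0 a₀ᵀ 0 (-rᵀ) 0 (-a₀) Qᵀ * blk3 (-Q) 0 0 a₀ᵀ 0 0 0 (-a₀) Qᵀ -
      blk3 (-Q) 0 0 a₀ᵀ 0 0 0 (-a₀) Qᵀ * blk3 (-Q) r 0 a₀ᵀ 0 (-rᵀ) 0 (-a₀) Qᵀ =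
    blk3 (r * a₀ᵀ) (Q * r) 0 0 0 (-(rᵀ * Qᵀ)) 0 0 (-(a₀ * rᵀ)) := by
  rw [blk3_mul, blk3_mul, blk3_sub]
  simp only [Matrix.neg_mul, Matrix.mul_neg, neg_neg, Matrix.mul_zero, Matrix.zero_mul,
    neg_zero, add_zero, zero_add, oneone, add_sub_cancel_left, sub_self, sub_zero, zero_sub,
    sub_neg_eq_add, sub_add_cancel_right]

theorem stmt14 (n : ℕ) (a₀ : Matrix (Fin n) (Fin 1) ℝ)
    (Q dQ : ℝ → Matrix (Fin n) (Fin n) ℝ) (r dr : ℝ → Matrix (Fin n) (Fin 1) ℝ)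
    (hQ : ∀ t i j, HasDerivAt (fun s => Q s i j) (dQ t i j) t)
    (hr : ∀ t i j, HasDerivAt (fun s => r s i j) (dr t i j) t) :
    (∀ (t : ℝ) (i j : Idx n),
      HasDerivAt (fun s => blk3 (-(Q s)) (r s) 0 a₀ᵀ 0 (-(r s)ᵀ) 0 (-a₀) (Q s)ᵀ i j)
        ((blk3 (-(Q t)) (r t) 0 a₀ᵀ 0 (-(r t)ᵀ) 0 (-a₀) (Q t)ᵀ *
            blk3 (-(Q t)) 0 0 a₀ᵀ 0 0 0 (-a₀) (Q t)ᵀ -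
          blk3 (-(Q t)) 0 0 a₀ᵀ 0 0 0 (-a₀) (Q t)ᵀ *
            blk3 (-(Q t)) (r t) 0 a₀ᵀ 0 (-(r t)ᵀ) 0 (-a₀) (Q t)ᵀ) i j) t) ↔
    (∀ t : ℝ, dQ t = -(r t * a₀ᵀ) ∧ dr t = Q t * r t) := by

  have hderiv : ∀ (t : ℝ) (i j : Idx n),
      HasDerivAt (fun s => blk3 (-(Q s)) (r s) 0 a₀ᵀ 0 (-(r s)ᵀ) 0 (-a₀) (Q s)ᵀ i j)
        (blk3 (-(dQ t)) (dr t) 0 0 0 (-(dr t)ᵀ) 0 0 ((dQ t)ᵀ) i j) t := by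
    intro t i j
    rcases i with (i|i)|i <;> rcases j with (j|j)|j <;>
      simp only [blk3, fromBlocks, fromRows, fromCols, of_apply, Sum.elim_inl, Sum.elim_inr,
        Matrix.neg_apply, Matrix.transpose_apply, Matrix.zero_apply] <;>
      first
        | exact (hQ t _ _).neg
        | exact hQ t _ _
        | exact (hr t _ _).neg
        | exact hr t _ _
        | exact hasDerivAt_const _ _
  constructor
  · intro h t
    have key : blk3 (r t * a₀ᵀ) (Q t * r t) 0 0 0 (-((r t)ᵀ * (Q t)ᵀ)) 0 0 (-(a₀ * (r t)ᵀ)) =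
        blk3 (-(dQ t)) (dr t) 0 0 0 (-(dr t)ᵀ) 0 0 ((dQ t)ᵀ) := by
      ext i j
      have h1 := h t i j
      rw [commutator_eq] at h1
      exact h1.unique (hderiv t i j)
    constructor
    · ext i j
      have := congrFun (congrFun key (Sum.inl (Sum.inl i))) (Sum.inl (Sum.inl j))
      simp only [blk3, fromBlocks, fromRows, fromCols, of_apply, Sum.elim_inl,
        Matrix.neg_apply] at this
      simp only [Matrix.neg_apply]
      linarith
    · ext i j
      have := congrFun (congrFun key (Sum.inl (Sum.inl i))) (Sum.inl (Sum.inr j))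
      simp only [blk3, fromBlocks, fromRows, fromCols, of_apply, Sum.elim_inl,
        Sum.elim_inr] at this
      linarith
  · intro h t i j
    have e : blk3 (r t * a₀ᵀ) (Q t * r t) 0 0 0 (-((r t)ᵀ * (Q t)ᵀ)) 0 0 (-(a₀ * (r t)ᵀ)) =
        blk3 (-(dQ t)) (dr t) 0 0 0 (-(dr t)ᵀ) 0 0 ((dQ t)ᵀ) := by
      rw [(h t).1, (h t).2]
      simp [Matrix.transpose_mul]
    rw [commutator_eq, e]
    exact hderiv t i j
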